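/- Any projector onto a state of the form (V ⊗ V)(A(3|ψ⁺⟩+|ψ⁻⟩) + B(|φ⁺⟩−|φ⁻⟩)) with V ∈ SU(2) and A ≠ 0 has weight on the symmetric subspace of ℂ²⊗ℂ² at least 9 times its weight on the antisymmetric subspace. Consequently, no finite sum of such projectors (with A ≠ 0 in each) can equal the identity on ℂ²⊗ℂ², since in the identity the trace over the symmetric subspace (3) is only 3 times that over the antisymmetric subspace (1). -/
import Mathlib


open scoped ComplexConjugate ComplexOrder
open Finset Matrix

noncomputable section

/-- Index set for three qubits: (clone 1, clone 2, ancilla). -/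
abbrev I3 := Fin 2 × Fin 2 × Fin 2

/-- Image of |0⟩|00⟩ under the universal 1→2 cloner:
    √(2/3)|00⟩|1⟩ − (1/√6)(|01⟩+|10⟩)|0⟩. -/
def out0 : I3 → ℂ := fun p =>
  if p = (0, 0, 1) then ((Real.sqrt (2/3) : ℝ) : ℂ)
  else if p = (0, 1, 0) then -(((1 / Real.sqrt 6 : ℝ)) : ℂ)
  else if p = (1, 0, 0) then -(((1 / Real.sqrt 6 : ℝ)) : ℂ)
  else 0

/-- Image of |1⟩|00⟩ under the universal 1→2 cloner:
    −√(2/3)|11⟩|0⟩ + (1/√6)(|10⟩+|01⟩)|1⟩. -/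
def out1 : I3 → ℂ := fun p =>
  if p = (1, 1, 0) then -((Real.sqrt (2/3) : ℝ) : ℂ)
  else if p = (1, 0, 1) then (((1 / Real.sqrt 6 : ℝ)) : ℂ)
  else if p = (0, 1, 1) then (((1 / Real.sqrt 6 : ℝ)) : ℂ)
  else 0

/-- Output of the cloner on input α|0⟩+β|1⟩. -/
def cloneOut (α β : ℂ) : I3 → ℂ := fun p => α * out0 p + β * out1 p

/-- Output density matrix U(|φ⟩⟨φ| ⊗ |00⟩⟨00|)U†. -/
def rhoOut (α β : ℂ) : Matrix I3 I3 ℂ :=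
  Matrix.of fun p q => cloneOut α β p * conj (cloneOut α β q)

/-- Reduced state of the first clone. -/
def rhoC (α β : ℂ) : Matrix (Fin 2) (Fin 2) ℂ :=
  Matrix.of fun i j => ∑ b : Fin 2, ∑ c : Fin 2, rhoOut α β (i, b, c) (j, b, c)

/-- Reduced state of the ancilla. -/
def rhoA (α β : ℂ) : Matrix (Fin 2) (Fin 2) ℂ :=
  Matrix.of fun i j => ∑ a : Fin 2, ∑ b : Fin 2, rhoOut α β (a, b, i) (a, b, j)

/-- Reduced state of the two clones. -/
def rhoCC (α β : ℂ) : Matrix (Fin 2 × Fin 2) (Fin 2 × Fin 2) ℂ :=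
  Matrix.of fun p q => ∑ c : Fin 2, rhoOut α β (p.1, p.2, c) (q.1, q.2, c)

def σx : Matrix (Fin 2) (Fin 2) ℂ := !![0, 1; 1, 0]
def σy : Matrix (Fin 2) (Fin 2) ℂ := !![0, -Complex.I; Complex.I, 0]
def σz : Matrix (Fin 2) (Fin 2) ℂ := !![1, 0; 0, -1]

/-- s·σ for a real 3-vector s. -/
def pauliDot (s : Fin 3 → ℝ) : Matrix (Fin 2) (Fin 2) ℂ :=
  ((s 0 : ℝ) : ℂ) • σx + ((s 1 : ℝ) : ℂ) • σy + ((s 2 : ℝ) : ℂ) • σz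

/-- (1/2)(I + s·σ), the state with Bloch vector s. -/
def blochMat (s : Fin 3 → ℝ) : Matrix (Fin 2) (Fin 2) ℂ :=
  (1/2 : ℂ) • (1 + pauliDot s)

def φvec (α β : ℂ) : Fin 2 → ℂ := ![α, β]

/-- Outer product |v⟩⟨v| on a qubit. -/
def outer (v : Fin 2 → ℂ) : Matrix (Fin 2) (Fin 2) ℂ :=
  Matrix.of fun i j => v i * conj (v j)

/-- The images U(|i⟩|00⟩) of the two input basis states. -/
def Uout : Fin 2 → I3 → ℂ := ![out0, out1]

/-- Effective operator on the input qubit corresponding to an operator F on the output: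
    E i j = ⟨U(|i⟩|00⟩)| F |U(|j⟩|00⟩)⟩ = (⟨00|_{ba} U† F U |00⟩_{ba}) i j. -/
def effOf (F : Matrix I3 I3 ℂ) : Matrix (Fin 2) (Fin 2) ℂ :=
  Matrix.of fun i j => ∑ p : I3, ∑ q : I3, conj (Uout i p) * F p q * Uout j q

/-- F ⊗ I ⊗ I: a measurement on the first clone only. -/
def extC (F : Matrix (Fin 2) (Fin 2) ℂ) : Matrix I3 I3 ℂ :=
  Matrix.of fun p q => F p.1 q.1 * (if p.2 = q.2 then 1 else 0)

/-- I ⊗ I ⊗ F: a measurement on the ancilla only. -/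
def extA (F : Matrix (Fin 2) (Fin 2) ℂ) : Matrix I3 I3 ℂ :=
  Matrix.of fun p q => (if (p.1, p.2.1) = (q.1, q.2.1) then 1 else 0) * F p.2.2 q.2.2

/-- F ⊗ I_ancilla: a measurement on the two clones. -/
def extCC (F : Matrix (Fin 2 × Fin 2) (Fin 2 × Fin 2) ℂ) : Matrix I3 I3 ℂ :=
  Matrix.of fun p q => F (p.1, p.2.1) (q.1, q.2.1) * (if p.2.2 = q.2.2 then 1 else 0)

/-- Bell basis on two qubits, in the order φ⁺, ψ⁺, φ⁻, ψ⁻. -/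
def bell : Fin 4 → (Fin 2 × Fin 2) → ℂ :=
  ![fun p => if p = (0,0) then ((1 / Real.sqrt 2 : ℝ) : ℂ)
             else if p = (1,1) then ((1 / Real.sqrt 2 : ℝ) : ℂ) else 0,
    fun p => if p = (0,1) then ((1 / Real.sqrt 2 : ℝ) : ℂ)
             else if p = (1,0) then ((1 / Real.sqrt 2 : ℝ) : ℂ) else 0,
    fun p => if p = (0,0) then ((1 / Real.sqrt 2 : ℝ) : ℂ)
             else if p = (1,1) then -((1 / Real.sqrt 2 : ℝ) : ℂ) else 0,
    fun p => if p = (0,1) then ((1 / Real.sqrt 2 : ℝ) : ℂ)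
             else if p = (1,0) then -((1 / Real.sqrt 2 : ℝ) : ℂ) else 0]

/-- Kronecker product of two single-qubit matrices. -/
def kron2 (A B : Matrix (Fin 2) (Fin 2) ℂ) : Matrix (Fin 2 × Fin 2) (Fin 2 × Fin 2) ℂ :=
  Matrix.of fun p q => A p.1 q.1 * B p.2 q.2

/-- Projector onto the symmetric subspace of two qubits: I − |ψ⁻⟩⟨ψ⁻|. -/
def symProj : Matrix (Fin 2 × Fin 2) (Fin 2 × Fin 2) ℂ :=
  1 - Matrix.of fun p q => bell 3 p * conj (bell 3 q)

/-- Projector onto the antisymmetric subspace: |ψ⁻⟩⟨ψ⁻|. -/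
def antiProj : Matrix (Fin 2 × Fin 2) (Fin 2 × Fin 2) ℂ :=
  Matrix.of fun p q => bell 3 p * conj (bell 3 q)

/-- Computational basis vector |abc⟩ of three qubits. -/
def e3 (a b c : Fin 2) : I3 → ℂ := fun p => if p = (a, b, c) then 1 else 0

/-- ∑ₚ conj(v p) w p, the inner product on three qubits. -/
def inner3 (v w : I3 → ℂ) : ℂ := ∑ p : I3, conj (v p) * w p

/-- The state A(3ψ⁺ + ψ⁻) + B(φ⁺ − φ⁻) on two qubits. -/
def kappaVec (A B : ℂ) : Fin 2 × Fin 2 → ℂ :=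
  fun p => A * (3 * bell 1 p + bell 3 p) + B * (bell 0 p - bell 2 p)

/-- (V ⊗ V) applied to a two-qubit vector. -/
def applyVV (V : Matrix (Fin 2) (Fin 2) ℂ) (v : Fin 2 × Fin 2 → ℂ) : Fin 2 × Fin 2 → ℂ :=
  fun p => ∑ q : Fin 2 × Fin 2, V p.1 q.1 * V p.2 q.2 * v q

/-- Weight ⟨v|P|v⟩ of a vector on the subspace with projector P. -/
def weightOn (P : Matrix (Fin 2 × Fin 2) (Fin 2 × Fin 2) ℂ) (v : Fin 2 × Fin 2 → ℂ) : ℝ :=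
  (∑ p : Fin 2 × Fin 2, ∑ q : Fin 2 × Fin 2, conj (v p) * P p q * v q).re


section AuxProofs

lemma aux_kron2_mul (A B C D : Matrix (Fin 2) (Fin 2) ℂ) :
    kron2 A C * kron2 B D = kron2 (A * B) (C * D) := by
  ext p q
  simp [kron2, Matrix.mul_apply, Fintype.sum_prod_type, Fin.sum_univ_two]
  ring

lemma aux_kron2_one : kron2 1 1 = (1 : Matrix (Fin 2 × Fin 2) (Fin 2 × Fin 2) ℂ) := by
  ext p q
  simp [kron2, Matrix.one_apply, Prod.ext_iff]
  split_ifs <;> simp_all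

lemma aux_kron2_conjT (A B : Matrix (Fin 2) (Fin 2) ℂ) : (kron2 A B)ᴴ = kron2 Aᴴ Bᴴ := by
  ext p q
  simp [kron2, Matrix.conjTranspose_apply]

lemma aux_applyVV_eq (V : Matrix (Fin 2) (Fin 2) ℂ) (v : Fin 2 × Fin 2 → ℂ) :
    applyVV V v = kron2 V V *ᵥ v := rfl

lemma aux_applyVV_norm (V : Matrix (Fin 2) (Fin 2) ℂ) (hV : Vᴴ * V = 1)
    (v : Fin 2 × Fin 2 → ℂ) :
    ∑ p : Fin 2 × Fin 2, conj (applyVV V v p) * applyVV V v p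
      = ∑ p : Fin 2 × Fin 2, conj (v p) * v p := by
  have key : (kron2 V V)ᴴ * kron2 V V = 1 := by
    rw [aux_kron2_conjT, aux_kron2_mul, hV, aux_kron2_one]
  have h1 : ∑ p : Fin 2 × Fin 2, conj (applyVV V v p) * applyVV V v p
      = star (applyVV V v) ⬝ᵥ applyVV V v := by
    simp [dotProduct, Complex.star_def]
  rw [h1, aux_applyVV_eq, star_mulVec, dotProduct_mulVec, vecMul_vecMul, key, vecMul_one]
  simp [dotProduct, Complex.star_def]

lemma aux_conj_bell3 (p : Fin 2 × Fin 2) : conj (bell 3 p) = bell 3 p := by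
  have h : bell 3 p = if p = (0,1) then ((1 / Real.sqrt 2 : ℝ) : ℂ)
             else if p = (1,0) then -((1 / Real.sqrt 2 : ℝ) : ℂ) else 0 := rfl
  rw [h]; split_ifs <;> simp

lemma aux_sqrt2_sq : ((1 / Real.sqrt 2 : ℝ) : ℂ) * ((1 / Real.sqrt 2 : ℝ) : ℂ) = 1/2 := by
  have h : (1 / Real.sqrt 2) * (1 / Real.sqrt 2) = 1/2 := by
    rw [div_mul_div_comm, Real.mul_self_sqrt (by norm_num), one_mul]
  rw [← Complex.ofReal_mul, h]; norm_num

lemma aux_bell3_vecMul (V : Matrix (Fin 2) (Fin 2) ℂ) (hdet : V.det = 1) :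
    bell 3 ᵥ* kron2 V V = bell 3 := by
  have hd : V 0 0 * V 1 1 - V 0 1 * V 1 0 = 1 := by
    rw [← Matrix.det_fin_two]; exact hdet
  funext p
  obtain ⟨p1, p2⟩ := p
  simp only [Matrix.vecMul, dotProduct, Fintype.sum_prod_type, Fin.sum_univ_two,
    kron2, Matrix.of_apply, bell]
  fin_cases p1 <;> fin_cases p2 <;>
    simp (config := { decide := true }) [Prod.mk.injEq]
  · exact show (((Real.sqrt 2:ℝ):ℂ))⁻¹ * (V 0 0 * V 1 0) +
        -((((Real.sqrt 2:ℝ):ℂ))⁻¹ * (V 1 0 * V 0 0)) = 0 by ring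
  · exact show (((Real.sqrt 2:ℝ):ℂ))⁻¹ * (V 0 0 * V 1 1) +
        -((((Real.sqrt 2:ℝ):ℂ))⁻¹ * (V 1 0 * V 0 1)) = (((Real.sqrt 2:ℝ):ℂ))⁻¹ by
      linear_combination (((Real.sqrt 2:ℝ):ℂ))⁻¹ * hd
  · exact show (((Real.sqrt 2:ℝ):ℂ))⁻¹ * (V 0 1 * V 1 0) +
        -((((Real.sqrt 2:ℝ):ℂ))⁻¹ * (V 1 1 * V 0 0)) = -(((Real.sqrt 2:ℝ):ℂ))⁻¹ by
      linear_combination (-(((Real.sqrt 2:ℝ):ℂ))⁻¹) * hd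
  · exact show (((Real.sqrt 2:ℝ):ℂ))⁻¹ * (V 0 1 * V 1 1) +
        -((((Real.sqrt 2:ℝ):ℂ))⁻¹ * (V 1 1 * V 0 1)) = 0 by ring

lemma aux_bell3_dot_kappa (A B : ℂ) :
    ∑ p : Fin 2 × Fin 2, bell 3 p * kappaVec A B p = A := by
  simp only [kappaVec, bell, Fintype.sum_prod_type, Fin.sum_univ_two]
  simp (config := { decide := true }) [Prod.mk.injEq]
  have h2 : (((Real.sqrt 2 : ℝ)) : ℂ) ^ 2 = 2 := by
    norm_cast; exact Real.sq_sqrt (by norm_num)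
  field_simp
  linear_combination (-A) * h2

lemma aux_overlap (V : Matrix (Fin 2) (Fin 2) ℂ) (hdet : V.det = 1)
    (v : Fin 2 × Fin 2 → ℂ) :
    ∑ p : Fin 2 × Fin 2, conj (bell 3 p) * applyVV V v p
      = ∑ p : Fin 2 × Fin 2, bell 3 p * v p := by
  have h : ∑ p : Fin 2 × Fin 2, conj (bell 3 p) * applyVV V v p
      = bell 3 ⬝ᵥ (kron2 V V *ᵥ v) := by
    rw [← aux_applyVV_eq]
    exact Finset.sum_congr rfl fun p _ => by rw [aux_conj_bell3]
  rw [h, dotProduct_mulVec, aux_bell3_vecMul V hdet]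
  rfl

lemma aux_weight_anti (V : Matrix (Fin 2) (Fin 2) ℂ) (hdet : V.det = 1) (A B : ℂ) :
    weightOn antiProj (applyVV V (kappaVec A B)) = Complex.normSq A := by
  set a := applyVV V (kappaVec A B) with ha
  have hs : ∑ p : Fin 2 × Fin 2, conj (bell 3 p) * a p = A := by
    rw [ha, aux_overlap V hdet, aux_bell3_dot_kappa]
  have hsplit : (∑ p : Fin 2 × Fin 2, ∑ q : Fin 2 × Fin 2, conj (a p) * antiProj p q * a q)
      = (∑ p : Fin 2 × Fin 2, conj (a p) * bell 3 p)
        * (∑ q : Fin 2 × Fin 2, conj (bell 3 q) * a q) := by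
    rw [Finset.sum_mul_sum]
    refine Finset.sum_congr rfl fun p _ => Finset.sum_congr rfl fun q _ => ?_
    simp only [antiProj, Matrix.of_apply]
    ring
  have hconj : (∑ p : Fin 2 × Fin 2, conj (a p) * bell 3 p)
      = conj (∑ p : Fin 2 × Fin 2, conj (bell 3 p) * a p) := by
    rw [map_sum]
    refine Finset.sum_congr rfl fun p _ => ?_
    rw [_root_.map_mul, Complex.conj_conj]
    ring
  unfold weightOn
  rw [hsplit, hconj, hs, ← Complex.normSq_eq_conj_mul_self]
  simp

lemma aux_weight_one (v : Fin 2 × Fin 2 → ℂ) :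
    weightOn 1 v = (∑ p : Fin 2 × Fin 2, conj (v p) * v p).re := by
  unfold weightOn
  congr 1
  refine Finset.sum_congr rfl fun p _ => ?_
  simp [Matrix.one_apply, mul_ite, ite_mul]

lemma aux_weight_sym (v : Fin 2 × Fin 2 → ℂ) :
    weightOn symProj v = weightOn 1 v - weightOn antiProj v := by
  unfold weightOn
  rw [← Complex.sub_re, ← Finset.sum_sub_distrib]
  congr 1
  refine Finset.sum_congr rfl fun p _ => ?_
  rw [← Finset.sum_sub_distrib]
  refine Finset.sum_congr rfl fun q _ => ?_
  simp only [symProj, antiProj, Matrix.sub_apply]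
  ring

lemma aux_kappa_normSq (A B : ℂ) :
    ∑ p : Fin 2 × Fin 2, Complex.normSq (kappaVec A B p)
      = 10 * Complex.normSq A + 2 * Complex.normSq B := by
  have hsne : Real.sqrt 2 ≠ 0 := by positivity
  have hs2 : Real.sqrt 2 * Real.sqrt 2 = 2 := Real.mul_self_sqrt (by norm_num)
  have k00 : kappaVec A B (0,0) = 0 := by
    show A * (3 * 0 + 0) + B * (((1 / Real.sqrt 2 : ℝ) : ℂ) - ((1 / Real.sqrt 2 : ℝ) : ℂ)) = 0
    ring
  have k01 : kappaVec A B (0,1) = A * ((4 / Real.sqrt 2 : ℝ) : ℂ) := by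
    show A * (3 * ((1 / Real.sqrt 2 : ℝ) : ℂ) + ((1 / Real.sqrt 2 : ℝ) : ℂ)) + B * (0 - 0)
      = A * ((4 / Real.sqrt 2 : ℝ) : ℂ)
    push_cast
    ring
  have k10 : kappaVec A B (1,0) = A * ((2 / Real.sqrt 2 : ℝ) : ℂ) := by
    show A * (3 * ((1 / Real.sqrt 2 : ℝ) : ℂ) + -((1 / Real.sqrt 2 : ℝ) : ℂ)) + B * (0 - 0)
      = A * ((2 / Real.sqrt 2 : ℝ) : ℂ)
    push_cast
    ring
  have k11 : kappaVec A B (1,1) = B * ((2 / Real.sqrt 2 : ℝ) : ℂ) := by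
    show A * (3 * 0 + 0) + B * (((1 / Real.sqrt 2 : ℝ) : ℂ) - -((1 / Real.sqrt 2 : ℝ) : ℂ))
      = B * ((2 / Real.sqrt 2 : ℝ) : ℂ)
    push_cast
    ring
  rw [Fintype.sum_prod_type, Fin.sum_univ_two, Fin.sum_univ_two, Fin.sum_univ_two,
    k00, k01, k10, k11]
  simp only [_root_.map_mul, Complex.normSq_ofReal, map_zero]
  field_simp
  nlinarith [Complex.normSq_nonneg A, Complex.normSq_nonneg B, hs2]

lemma aux_part1 (A B : ℂ) (V : Matrix (Fin 2) (Fin 2) ℂ)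
    (hV : V ∈ Matrix.specialUnitaryGroup (Fin 2) ℂ)
    (hnorm : ∑ p : Fin 2 × Fin 2, Complex.normSq (kappaVec A B p) = 1) :
    9 * weightOn antiProj (applyVV V (kappaVec A B)) ≤
      weightOn symProj (applyVV V (kappaVec A B)) := by
  obtain ⟨hU, hdet⟩ := Matrix.mem_specialUnitaryGroup_iff.mp hV
  have hVu : Vᴴ * V = 1 := by
    have h := Matrix.mem_unitaryGroup_iff'.mp hU
    rwa [Matrix.star_eq_conjTranspose] at h
  have hanti : weightOn antiProj (applyVV V (kappaVec A B)) = Complex.normSq A :=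
    aux_weight_anti V hdet A B
  have hone : weightOn 1 (applyVV V (kappaVec A B)) = 1 := by
    rw [aux_weight_one, aux_applyVV_norm V hVu]
    have h : ∑ p : Fin 2 × Fin 2, conj (kappaVec A B p) * kappaVec A B p
        = ((∑ p : Fin 2 × Fin 2, Complex.normSq (kappaVec A B p) : ℝ) : ℂ) := by
      push_cast
      exact Finset.sum_congr rfl fun p _ => (Complex.normSq_eq_conj_mul_self).symm
    rw [h, hnorm]
    simp
  rw [aux_weight_sym, hone, hanti]
  have hk := aux_kappa_normSq A B
  rw [hnorm] at hk
  nlinarith [Complex.normSq_nonneg B]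

lemma aux_trace (n : ℕ) (a : Fin n → (Fin 2 × Fin 2 → ℂ))
    (hsum : (∑ i : Fin n, Matrix.of fun p q => a i p * conj (a i q)) =
      (1 : Matrix (Fin 2 × Fin 2) (Fin 2 × Fin 2) ℂ))
    (P : Matrix (Fin 2 × Fin 2) (Fin 2 × Fin 2) ℂ) :
    ∑ i : Fin n, weightOn P (a i) = (∑ p : Fin 2 × Fin 2, P p p).re := by
  have key : ∑ i : Fin n, ∑ p : Fin 2 × Fin 2, ∑ q : Fin 2 × Fin 2,
      conj (a i p) * P p q * a i q = ∑ p : Fin 2 × Fin 2, P p p := by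
    rw [Finset.sum_comm]
    refine Finset.sum_congr rfl fun p _ => ?_
    rw [Finset.sum_comm]
    have inner : ∀ q : Fin 2 × Fin 2,
        (∑ i : Fin n, conj (a i p) * P p q * a i q)
          = P p q * (1 : Matrix (Fin 2 × Fin 2) (Fin 2 × Fin 2) ℂ) q p := by
      intro q
      have h1 : (∑ i : Fin n, Matrix.of (fun p q => a i p * conj (a i q))) q p
          = (1 : Matrix (Fin 2 × Fin 2) (Fin 2 × Fin 2) ℂ) q p := by rw [hsum]
      rw [Matrix.sum_apply] at h1
      simp only [Matrix.of_apply] at h1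
      rw [← h1, Finset.mul_sum]
      exact Finset.sum_congr rfl fun i _ => by ring
    calc (∑ q : Fin 2 × Fin 2, ∑ i : Fin n, conj (a i p) * P p q * a i q)
        = ∑ q : Fin 2 × Fin 2,
            P p q * (1 : Matrix (Fin 2 × Fin 2) (Fin 2 × Fin 2) ℂ) q p := by
          exact Finset.sum_congr rfl fun q _ => inner q
      _ = P p p := by simp [Matrix.one_apply, mul_ite, ite_mul]
  unfold weightOn
  rw [← Complex.re_sum, key]

lemma aux_trace_anti : (∑ p : Fin 2 × Fin 2, antiProj p p).re = 1 := by
  simp only [antiProj, Matrix.of_apply, Fintype.sum_prod_type, Fin.sum_univ_two]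
  have h : ∀ p : Fin 2 × Fin 2, bell 3 p * conj (bell 3 p) = bell 3 p * bell 3 p :=
    fun p => by rw [aux_conj_bell3]
  rw [h, h, h, h]
  simp (config := { decide := true }) [bell, Prod.mk.injEq]
  have hs2 : Real.sqrt 2 * Real.sqrt 2 = 2 := Real.mul_self_sqrt (by norm_num)
  nlinarith [hs2]

lemma aux_trace_sym : (∑ p : Fin 2 × Fin 2, symProj p p).re = 3 := by
  have h : (∑ p : Fin 2 × Fin 2, symProj p p)
      = (∑ p : Fin 2 × Fin 2, (1 : Matrix (Fin 2 × Fin 2) (Fin 2 × Fin 2) ℂ) p p)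
        - ∑ p : Fin 2 × Fin 2, antiProj p p := by
    rw [← Finset.sum_sub_distrib]
    exact Finset.sum_congr rfl fun p _ => by simp [symProj, antiProj, Matrix.sub_apply]
  rw [h, Complex.sub_re, aux_trace_anti]
  norm_num [Matrix.one_apply]

end AuxProofs

/-- any projector onto (V⊗V)(A(3ψ⁺+ψ⁻)+B(φ⁺−φ⁻)) with V ∈ SU(2) and A ≠ 0
has symmetric weight at least 9 times its antisymmetric weight; hence no finite sum of
such projectors can equal the identity on ℂ²⊗ℂ². -/
theorem no_complete_clone_ancilla_povm :
    (∀ (A B : ℂ) (V : Matrix (Fin 2) (Fin 2) ℂ),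
      V ∈ Matrix.specialUnitaryGroup (Fin 2) ℂ → A ≠ 0 →
      (∑ p : Fin 2 × Fin 2, Complex.normSq (kappaVec A B p) = 1) →
      9 * weightOn antiProj (applyVV V (kappaVec A B)) ≤
        weightOn symProj (applyVV V (kappaVec A B))) ∧
    ∀ (n : ℕ) (A B : Fin n → ℂ) (V : Fin n → Matrix (Fin 2) (Fin 2) ℂ),
      (∀ i, V i ∈ Matrix.specialUnitaryGroup (Fin 2) ℂ) → (∀ i, A i ≠ 0) →
      (∀ i, ∑ p : Fin 2 × Fin 2, Complex.normSq (kappaVec (A i) (B i) p) = 1) →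
      (∑ i : Fin n, Matrix.of fun p q =>
          applyVV (V i) (kappaVec (A i) (B i)) p *
            conj (applyVV (V i) (kappaVec (A i) (B i)) q)) ≠
        (1 : Matrix (Fin 2 × Fin 2) (Fin 2 × Fin 2) ℂ) := by
  constructor
  · exact fun A B V hV _ hnorm => aux_part1 A B V hV hnorm
  · intro n A B V hV hA hnorm hsum
    set a : Fin n → (Fin 2 × Fin 2 → ℂ) :=
      fun i => applyVV (V i) (kappaVec (A i) (B i)) with ha
    have tra := aux_trace n a hsum antiProj
    have trs := aux_trace n a hsum symProj
    rw [aux_trace_anti] at tra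
    rw [aux_trace_sym] at trs
    have hle : ∀ i : Fin n, 9 * weightOn antiProj (a i) ≤ weightOn symProj (a i) :=
      fun i => aux_part1 (A i) (B i) (V i) (hV i) (hnorm i)
    have hsumle : (9 : ℝ) * ∑ i : Fin n, weightOn antiProj (a i)
        ≤ ∑ i : Fin n, weightOn symProj (a i) := by
      rw [Finset.mul_sum]
      exact Finset.sum_le_sum fun i _ => hle i
    rw [tra, trs] at hsumle
    linarith
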